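/- Let R be a commutative ring, m a natural number, and M an m×m matrix over R. Write qᵢ for the coefficient of X^i in the characteristic polynomial of M (so q_m = 1). Then the adjugate of the characteristic matrix X·I − M over R[X] is given by adj(X·I − M) = ∑_{k=0}^{m−1} X^{m−1−k} · ( ∑_{j=0}^{k} q_{m−k+j} · M^j ), where each matrix ∑_{j=0}^{k} q_{m−k+j}·M^j over R is embedded entrywise into R[X]. -/
import Mathlib


open Matrix Polynomial

/-- Explicit formula for the adjugate of the characteristic matrix:
`adj(X·I - M) = ∑_{k=0}^{m-1} X^{m-1-k} • (∑_{j=0}^{k} q_{m-k+j} • M^j)`, where `qᵢ`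
is the coefficient of `X^i` in the characteristic polynomial of `M`. -/
theorem adjugate_charmatrix_eq (R : Type*) [CommRing R] (m : ℕ)
    (M : Matrix (Fin m) (Fin m) R) :
    M.charmatrix.adjugate =
      ∑ k ∈ Finset.range m, (Polynomial.X : Polynomial R) ^ (m - 1 - k) •
        ((∑ j ∈ Finset.range (k + 1), M.charpoly.coeff (m - k + j) • M ^ j).map
          (Polynomial.C : R →+* Polynomial R)) := by
  rcases subsingleton_or_nontrivial R with hR | hR
  · exact Subsingleton.elim _ _
  set p := M.charpoly with hp
  have hmonic : p.Monic := M.charpoly_monic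
  have hdeg : p.natDegree = m := by simp [hp]
  set N : ℕ → Matrix (Fin m) (Fin m) R :=
    fun k => ∑ j ∈ Finset.range (k + 1), p.coeff (m - k + j) • M ^ j with hN
  have hN0 : N 0 = 1 := by
    simp [hN, ← hdeg, hmonic.coeff_natDegree]
  have hNm : N m = 0 := by
    have h := M.aeval_self_charpoly
    rw [← hp, aeval_eq_sum_range' (n := m + 1) (by omega) M] at h
    simpa [hN] using h
  have hNsucc : ∀ k, k < m → M * N k = N (k + 1) - p.coeff (m - (k + 1)) • 1 := by
    intro k hk
    rw [eq_sub_iff_add_eq, hN]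
    simp only
    rw [Finset.mul_sum,
      Finset.sum_range_succ' (fun i => p.coeff (m - (k + 1) + i) • M ^ i) (k + 1)]
    simp only [Nat.add_zero, pow_zero]
    congr 1
    apply Finset.sum_congr rfl
    intro j hj
    rw [mul_smul_comm, ← pow_succ']
    congr 2
    omega
  set B := ∑ k ∈ Finset.range m, (X : R[X]) ^ (m - 1 - k) •
      ((N k).map (C : R →+* R[X])) with hB
  have hch : M.charmatrix = (X : R[X]) • (1 : Matrix (Fin m) (Fin m) R[X]) - M.map C := by
    ext i j
    by_cases h : i = j <;>
      simp [charmatrix, Matrix.scalar, h, Matrix.one_apply, Matrix.smul_apply]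
  have hkey : M.charmatrix * B = p • (1 : Matrix (Fin m) (Fin m) R[X]) := by
    rw [hB, Finset.mul_sum]
    have hterm : ∀ k ∈ Finset.range m,
        M.charmatrix * ((X : R[X]) ^ (m - 1 - k) • ((N k).map C)) =
          ((X : R[X]) ^ (m - k) • ((N k).map C)
            - (X : R[X]) ^ (m - (k + 1)) • ((N (k + 1)).map C))
          + (C (p.coeff (m - 1 - k)) * (X : R[X]) ^ (m - 1 - k)) •
              (1 : Matrix (Fin m) (Fin m) R[X]) := by
      intro k hk
      rw [Finset.mem_range] at hk
      rw [mul_smul_comm, hch, sub_mul, smul_mul_assoc, one_mul, ← Matrix.map_mul,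
        hNsucc k hk, Matrix.map_sub _ (fun a b => C.map_sub a b), smul_sub, smul_sub]
      have h1 : (X : R[X]) ^ (m - 1 - k) • ((X : R[X]) • (N k).map C)
          = (X : R[X]) ^ (m - k) • (N k).map C := by
        rw [smul_smul, ← pow_succ]
        congr 2
        omega
      have h2 : ((p.coeff (m - (k + 1)) • (1 : Matrix (Fin m) (Fin m) R)).map C : Matrix (Fin m) (Fin m) R[X])
          = C (p.coeff (m - (k + 1))) • (1 : Matrix (Fin m) (Fin m) R[X]) := by
        ext i j
        by_cases h : i = j <;> simp [h, Matrix.one_apply]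
      rw [h1, h2]
      have h3 : m - 1 - k = m - (k + 1) := by omega
      rw [h3, smul_smul, mul_comm ((X : R[X]) ^ (m - (k + 1))) (C _)]
      abel
    rw [Finset.sum_congr rfl hterm, Finset.sum_add_distrib,
      Finset.sum_range_sub' (fun k => (X : R[X]) ^ (m - k) • ((N k).map C))]
    have hmap1 : ((N 0).map C : Matrix (Fin m) (Fin m) R[X]) = 1 := by
      rw [hN0]; exact Matrix.map_one C C.map_zero C.map_one
    rw [hmap1, hNm]
    simp only [Matrix.map_zero C C.map_zero, smul_zero, sub_zero, Nat.sub_self, pow_zero]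
    rw [← Finset.sum_smul]
    have hsum : ∑ k ∈ Finset.range m, C (p.coeff (m - 1 - k)) * (X : R[X]) ^ (m - 1 - k)
        = ∑ i ∈ Finset.range m, C (p.coeff i) * (X : R[X]) ^ i :=
      Finset.sum_range_reflect (fun i => C (p.coeff i) * (X : R[X]) ^ i) m
    rw [hsum]
    have hps : p = (X : R[X]) ^ m + ∑ i ∈ Finset.range m, C (p.coeff i) * (X : R[X]) ^ i := by
      conv_lhs => rw [p.as_sum_range_C_mul_X_pow]
      rw [hdeg, Finset.sum_range_succ]
      have : p.coeff m = 1 := by rw [← hdeg]; exact hmonic.coeff_natDegree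
      rw [this, C_1, one_mul, add_comm]
    rw [Nat.sub_zero, ← add_smul]
    conv_rhs => rw [hps]
  have hdet : M.charmatrix.det = p := rfl
  have h3 : p • B = p • M.charmatrix.adjugate := by
    calc p • B = (M.charmatrix.adjugate * M.charmatrix) * B := by
          rw [Matrix.adjugate_mul, hdet, Matrix.smul_mul, Matrix.one_mul]
      _ = M.charmatrix.adjugate * (M.charmatrix * B) := by rw [Matrix.mul_assoc]
      _ = p • M.charmatrix.adjugate := by
          rw [hkey, Matrix.mul_smul, Matrix.mul_one]
  refine Matrix.ext fun i j => ?_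
  have h4 : p * B i j = p * M.charmatrix.adjugate i j := by
    have := congrFun (congrFun h3 i) j
    simpa using this
  exact (hmonic.isRegular.left h4).symm
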